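/- Let H be a good homogeneous relation on X, x ∈ X, MaxM(x) = {M₁,…,M_k} the partition of X∖{x} into maximal homogeneous modules not containing x, and H(x) the quotient relation obtained by restricting H to {x, e₁,…,e_k} where e_i ∈ M_i are arbitrary representatives. Then every non-trivial homogeneous module of H(x) (one of size at least 2 and not the whole set) contains x. -/
import Mathlib


/-- `H` is a homogeneous relation: for each `x`, the binary relation
`H x · ·` is an equivalence relation on the elements distinct from `x`. -/
def IsHomRel {X : Type*} (H : X → X → X → Prop) : Prop :=
  (∀ x y, y ≠ x → H x y y) ∧
  (∀ x y z, y ≠ x → z ≠ x → H x y z → H x z y) ∧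
  (∀ x y z w, y ≠ x → z ≠ x → w ≠ x → H x y z → H x z w → H x y w)

/-- `M` is a homogeneous module of `H`. -/
def IsModule {X : Type*} (H : X → X → X → Prop) (M : Set X) : Prop :=
  ∀ m ∈ M, ∀ m' ∈ M, ∀ x ∉ M, H x m m'

/-- Two sets overlap. -/
def Overlap {X : Type*} (A B : Set X) : Prop :=
  (A ∩ B).Nonempty ∧ (A \ B).Nonempty ∧ (B \ A).Nonempty

/-- `H` is good: it satisfies the modular quotient property. -/
def Good {X : Type*} (H : X → X → X → Prop) : Prop :=
  ∀ M : Set X, IsModule H M →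
    ∀ x ∈ M, ∀ y ∈ M, ∀ s ∉ M, ∀ t ∉ M, (H x s t ↔ H y s t)

/-- `N` is a homogeneous module of the relation `H` induced on `S`. -/
def IsModuleIn {X : Type*} (H : X → X → X → Prop) (S N : Set X) : Prop :=
  ∀ m ∈ N, ∀ m' ∈ N, ∀ x ∈ S, x ∉ N → H x m m'

theorem stmt_19 {X : Type*} [Fintype X] (H : X → X → X → Prop)
    (hH : IsHomRel H) (hgood : Good H) (x : X)
    (k : ℕ) (M : Fin k → Set X)
    (hmod : ∀ i, IsModule H (M i)) (hx : ∀ i, x ∉ M i)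
    (hmax : ∀ i, ∀ N : Set X, IsModule H N → x ∉ N → M i ⊆ N → N = M i)
    (hdisj : ∀ i j, i ≠ j → Disjoint (M i) (M j))
    (hcover : (⋃ i, M i) = ({x}ᶜ : Set X))
    (e : Fin k → X) (he : ∀ i, e i ∈ M i)
    (N : Set X) (hN : N ⊆ insert x (Set.range e))
    (hNmod : IsModuleIn H (insert x (Set.range e)) N)
    (hbig : 1 < N.ncard) (hNS : N ≠ insert x (Set.range e)) :
    x ∈ N := by
  by_contra hxN
  obtain ⟨hrefl, hsymm, htrans⟩ := hH
  have hNrange : N ⊆ Set.range e := by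
    intro a ha
    rcases hN ha with h | h
    · exact absurd (h ▸ ha) hxN
    · exact h
  have heinj : ∀ i j : Fin k, e i = e j → i = j := by
    intro i j hij
    by_contra hne
    exact Set.disjoint_left.mp (hdisj i j hne) (he i) (hij ▸ he j)
  -- The union of the modules whose representative is in N
  set N' : Set X := ⋃ i ∈ {i : Fin k | e i ∈ N}, M i with hN'def
  have hmem : ∀ i : Fin k, e i ∈ N → M i ⊆ N' := by
    intro i hi
    exact Set.subset_biUnion_of_mem (u := M) hi
  have hxN' : x ∉ N' := by
    simp only [hN'def, Set.mem_iUnion, exists_prop]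
    rintro ⟨i, _, hxi⟩
    exact hx i hxi
  have hne_x : ∀ i : Fin k, e i ≠ x := fun i h => hx i (h ▸ he i)
  -- N' is a module of H
  have hN'mod : IsModule H N' := by
    intro m hm m' hm' y hy
    simp only [hN'def, Set.mem_iUnion, exists_prop] at hm hm'
    obtain ⟨i, hiN, hmi⟩ := hm
    obtain ⟨j, hjN, hmj⟩ := hm'
    have hyMi : y ∉ M i := fun h => hy (hmem i hiN h)
    have hyMj : y ∉ M j := fun h => hy (hmem j hjN h)
    have hmy : m ≠ y := fun h => hyMi (h ▸ hmi)
    have hm'y : m' ≠ y := fun h => hyMj (h ▸ hmj)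
    have heiy : e i ≠ y := fun h => hyMi (h ▸ he i)
    have hejy : e j ≠ y := fun h => hyMj (h ▸ he j)
    have h1 : H y m (e i) := hmod i m hmi (e i) (he i) y hyMi
    have h3 : H y (e j) m' := hmod j (e j) (he j) m' hmj y hyMj
    have h2 : H y (e i) (e j) := by
      by_cases hyx : y = x
      · subst hyx
        exact hNmod (e i) hiN (e j) hjN y (Set.mem_insert y _) hxN
      · have hycov : y ∈ ⋃ i, M i := by
          rw [hcover]; simpa using hyx
        obtain ⟨l, hl⟩ := Set.mem_iUnion.mp hycov
        have helN : e l ∉ N := by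
          intro hlN
          exact hy (hmem l hlN hl)
        have hil : i ≠ l := fun h => helN (h ▸ hiN)
        have hjl : j ≠ l := fun h => helN (h ▸ hjN)
        have heiMl : e i ∉ M l := Set.disjoint_left.mp (hdisj i l hil) (he i)
        have hejMl : e j ∉ M l := Set.disjoint_left.mp (hdisj j l hjl) (he j)
        have hrep : H (e l) (e i) (e j) :=
          hNmod (e i) hiN (e j) hjN (e l)
            (Set.mem_insert_of_mem x ⟨l, rfl⟩) helN
        exact (hgood (M l) (hmod l) y hl (e l) (he l) (e i) heiMl (e j) hejMl).mpr hrep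
    exact htrans y m (e i) m' hmy heiy hm'y h1
      (htrans y (e i) (e j) m' heiy hejy hm'y h2 h3)
  -- Get two distinct indices with representatives in N
  obtain ⟨a, ha, b, hb, hab⟩ := (Set.one_lt_ncard (Set.toFinite N)).mp hbig
  obtain ⟨i, rfl⟩ := hNrange ha
  obtain ⟨j, rfl⟩ := hNrange hb
  have hij : i ≠ j := fun h => hab (h ▸ rfl)
  -- maximality contradiction
  have hN'eq : N' = M i := hmax i N' hN'mod hxN' (hmem i ha)
  have hejN' : e j ∈ N' := hmem j hb (he j)
  rw [hN'eq] at hejN'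
  exact Set.disjoint_left.mp (hdisj j i hij.symm) (he j) hejN'
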